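/- Let U be a closed set of Lyndon words over a well-ordered alphabet X (i.e., U contains all Lyndon factors of each of its elements). Suppose u, v ∈ U with u >_lex v and there is no w ∈ U with u >_lex w >_lex v. Then uv is a Lyndon word whose Shirshov factorization is (u, v), uv ∉ U, and every proper Lyndon factor of uv lies in U. Consequently, if U is finite, then the set Φ_L(U) of Lyndon words not in U all of whose proper Lyndon factors lie in U satisfies #(Φ_L(U) \ X) ≥ #(U) − 1. -/

import Mathlib

set_option linter.unusedSectionVars false
set_option maxHeartbeats 1000000


variable {X : Type*} [LinearOrder X] [WellFoundedLT X]

/-- The partial order `≺` on words: `u ≺ v` iff `u = r ++ x :: s`, `v = r ++ y :: t`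
with letters `x < y`. -/
def Prec (u v : List X) : Prop :=
  ∃ (r s t : List X) (x y : X), x < y ∧ u = r ++ x :: s ∧ v = r ++ y :: t

/-- The pseudo-lexicographic order: `u <_lex v` iff `v` is a proper prefix of `u` or `u ≺ v`. -/
def PLex (u v : List X) : Prop :=
  (v <+: u ∧ v ≠ u) ∨ Prec u v

/-- `u ≤_lex v`. -/
def PLexLe (u v : List X) : Prop := u = v ∨ PLex u v

/-- A Lyndon word (Kharchenko convention): a nonempty word strictly greater in the
pseudo-lexicographic order than each of its proper nonempty suffixes. -/
def IsLyndon (u : List X) : Prop :=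
  u ≠ [] ∧ ∀ v w : List X, u = v ++ w → v ≠ [] → w ≠ [] → PLex w u


/-- The Shirshov factorization of `u`: `u = uL ++ uR` where `uR` is the
pseudo-lexicographically largest proper (nonempty) suffix of `u`. -/
def IsShirshov (u uL uR : List X) : Prop :=
  u = uL ++ uR ∧ uL ≠ [] ∧ uR ≠ [] ∧
    ∀ w : List X, w <:+ u → w ≠ u → w ≠ [] → w = uR ∨ PLex w uR


/-- A set of Lyndon words is closed if it contains all Lyndon factors of its elements. -/
def LyndonClosed (U : Set (List X)) : Prop :=
  ∀ u ∈ U, ∀ v : List X, IsLyndon v → v <:+: u → v ∈ U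

/-- `Φ_L(U)`: Lyndon words not in `U` all of whose proper Lyndon factors lie in `U`. -/
def PhiL (U : Set (List X)) : Set (List X) :=
  {v | IsLyndon v ∧ v ∉ U ∧ ∀ t : List X, IsLyndon t → t <:+: v → t ≠ v → t ∈ U}

lemma prec_append {a b c d : List X} (h : Prec a b) : Prec (a ++ c) (b ++ d) := by
  obtain ⟨r, s, t, x, y, hxy, rfl, rfl⟩ := h
  exact ⟨r, s ++ c, t ++ d, x, y, hxy, by simp, by simp⟩

lemma prec_append_right {a b d : List X} (h : Prec a b) : Prec a (b ++ d) := by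
  obtain ⟨r, s, t, x, y, hxy, rfl, rfl⟩ := h
  exact ⟨r, s, t ++ d, x, y, hxy, rfl, by simp⟩

lemma not_plex_nil_left {b : List X} : ¬ PLex [] b := by
  rintro (⟨h, hne⟩ | ⟨r, s, t, x, y, hxy, h1, h2⟩)
  · exact hne (List.eq_nil_of_prefix_nil h)
  · exact absurd h1 (by simp)

lemma plex_nil_right {a : List X} (h : a ≠ []) : PLex a [] :=
  Or.inl ⟨List.nil_prefix, fun hh => h hh.symm⟩

lemma plex_nil_right_iff {a : List X} : PLex a [] ↔ a ≠ [] := by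
  constructor
  · rintro (⟨h, hne⟩ | ⟨r, s, t, x, y, hxy, h1, h2⟩)
    · exact fun hh => hne (hh ▸ rfl)
    · exact absurd h2 (by simp)
  · exact plex_nil_right

lemma plex_cons_iff {x y : X} {a b : List X} :
    PLex (x :: a) (y :: b) ↔ x < y ∨ (x = y ∧ PLex a b) := by
  constructor
  · rintro (⟨h, hne⟩ | ⟨r, s, t, x', y', hxy, h1, h2⟩)
    · rw [List.cons_prefix_cons] at h
      exact Or.inr ⟨h.1.symm, Or.inl ⟨h.2, fun hh => hne (by rw [h.1, hh])⟩⟩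
    · cases r with
      | nil =>
        simp only [List.nil_append, List.cons.injEq] at h1 h2
        exact Or.inl (h1.1 ▸ h2.1 ▸ hxy)
      | cons z r' =>
        simp only [List.cons_append, List.cons.injEq] at h1 h2
        exact Or.inr ⟨h1.1.trans h2.1.symm, Or.inr ⟨r', s, t, x', y', hxy, h1.2, h2.2⟩⟩
  · rintro (h | ⟨rfl, (⟨h, hne⟩ | ⟨r, s, t, x', y', hxy, h1, h2⟩)⟩)
    · exact Or.inr ⟨[], a, b, x, y, h, rfl, rfl⟩
    · exact Or.inl ⟨List.cons_prefix_cons.mpr ⟨rfl, h⟩, fun hh => hne (by injection hh)⟩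
    · exact Or.inr ⟨x :: r, s, t, x', y', hxy, by rw [h1]; rfl, by rw [h2]; rfl⟩

lemma plex_irrefl (a : List X) : ¬ PLex a a := by
  induction a with
  | nil => exact not_plex_nil_left
  | cons x a ih =>
    rw [plex_cons_iff]
    rintro (h | ⟨-, h⟩)
    · exact lt_irrefl _ h
    · exact ih h

lemma plex_trans {a b c : List X} (hab : PLex a b) (hbc : PLex b c) : PLex a c := by
  induction a generalizing b c with
  | nil => exact absurd hab not_plex_nil_left
  | cons x a ih =>
    cases b with
    | nil => exact absurd hbc not_plex_nil_left
    | cons y b =>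
      cases c with
      | nil => exact plex_nil_right (by simp)
      | cons z c =>
        rw [plex_cons_iff] at hab hbc ⊢
        rcases hab with h1 | ⟨rfl, h1⟩
        · rcases hbc with h2 | ⟨rfl, h2⟩
          · exact Or.inl (h1.trans h2)
          · exact Or.inl h1
        · rcases hbc with h2 | ⟨rfl, h2⟩
          · exact Or.inl h2
          · exact Or.inr ⟨rfl, ih h1 h2⟩

lemma plex_trichotomy (a b : List X) : a = b ∨ PLex a b ∨ PLex b a := by
  induction a generalizing b with
  | nil =>
    cases b with
    | nil => exact Or.inl rfl
    | cons y b => exact Or.inr (Or.inr (plex_nil_right (by simp)))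
  | cons x a ih =>
    cases b with
    | nil => exact Or.inr (Or.inl (plex_nil_right (by simp)))
    | cons y b =>
      rcases lt_trichotomy x y with h | rfl | h
      · exact Or.inr (Or.inl (plex_cons_iff.mpr (Or.inl h)))
      · rcases ih b with rfl | h | h
        · exact Or.inl rfl
        · exact Or.inr (Or.inl (plex_cons_iff.mpr (Or.inr ⟨rfl, h⟩)))
        · exact Or.inr (Or.inr (plex_cons_iff.mpr (Or.inr ⟨rfl, h⟩)))
      · exact Or.inr (Or.inr (plex_cons_iff.mpr (Or.inl h)))

lemma plex_asymm {a b : List X} (hab : PLex a b) (hba : PLex b a) : False :=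
  plex_irrefl a (plex_trans hab hba)

lemma plex_append_left {a b : List X} (w : List X) (h : PLex a b) :
    PLex (w ++ a) (w ++ b) := by
  induction w with
  | nil => exact h
  | cons x w ih => exact plex_cons_iff.mpr (Or.inr ⟨rfl, ih⟩)

lemma plex_proper_prefix {a c : List X} (h : c ≠ []) : PLex (a ++ c) a :=
  Or.inl ⟨List.prefix_append a c, fun hh => h (by simpa using hh.symm)⟩

lemma plex_prec_of_le_length {a b : List X} (h : PLex a b) (hl : a.length ≤ b.length) :
    Prec a b := by
  rcases h with ⟨hpre, hne⟩ | h
  · exact absurd (hpre.eq_of_length_le hl) hne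
  · exact h

lemma suffix_of_suffix_length_le {a b c : List X} (h1 : a <:+ c) (h2 : b <:+ c)
    (h : a.length ≤ b.length) : a <:+ b := by
  rw [← List.reverse_prefix] at h1 h2 ⊢
  exact List.prefix_of_prefix_length_le h1 h2 (by simpa using h)

lemma suffix_decomp {u v b : List X} (h : b <:+ u ++ v) (hl : v.length < b.length) :
    ∃ a s', a ++ s' = u ∧ b = s' ++ v ∧ s' ≠ [] := by
  obtain ⟨a, ha⟩ := h
  have hlen : a.length < u.length := by
    have := congrArg List.length ha
    simp only [List.length_append] at this
    omega
  have hpre : a <+: u :=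
    List.prefix_of_prefix_length_le ⟨b, ha⟩ (List.prefix_append u v) hlen.le
  obtain ⟨s', rfl⟩ := hpre
  refine ⟨a, s', rfl, ?_, ?_⟩
  · rw [List.append_assoc] at ha
    exact (List.append_cancel_left ha).symm ▸ rfl
  · rintro rfl
    simp at hlen

lemma plex_self_append {v u : List X} (hv : IsLyndon v) (hune : u ≠ [])
    (hvu : PLex v u) : PLex v (u ++ v) := by
  rcases hvu with ⟨hpre, hne⟩ | h
  · obtain ⟨z, rfl⟩ := hpre
    have hz : z ≠ [] := by rintro rfl; simp at hne
    exact plex_append_left u (hv.2 u z rfl hune hz)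
  · exact Or.inr (prec_append_right h)

lemma lyndon_append {u v : List X} (hu : IsLyndon u) (hv : IsLyndon v)
    (hvu : PLex v u) : IsLyndon (u ++ v) := by
  have hvlt : PLex v (u ++ v) := plex_self_append hv hu.1 hvu
  refine ⟨by simp [hu.1], fun a b hab ha hb => ?_⟩
  have hbsuf : b <:+ u ++ v := ⟨a, hab.symm⟩
  rcases le_or_gt b.length v.length with hle | hlt
  · have hbv : b <:+ v := suffix_of_suffix_length_le hbsuf (List.suffix_append u v) hle
    obtain ⟨c, rfl⟩ := hbv
    rcases eq_or_ne c [] with rfl | hc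
    · exact hvlt
    · exact plex_trans (hv.2 c b rfl hc hb) hvlt
  · obtain ⟨a', s', hs'u, rfl, hs'ne⟩ := suffix_decomp hbsuf hlt
    have ha' : a' ≠ [] := by
      rintro rfl
      simp only [List.nil_append] at hs'u
      subst hs'u
      have hlen := congrArg List.length hab
      simp only [List.length_append] at hlen
      have hpos := List.length_pos_iff.mpr ha
      omega
    have hplex : PLex s' u := hu.2 a' s' hs'u.symm ha' hs'ne
    have hlen : s'.length ≤ u.length := by
      have := congrArg List.length hs'u; simp at this; omega
    exact Or.inr (prec_append (plex_prec_of_le_length hplex hlen))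

lemma exists_plex_max (l : List (List X)) (h : l ≠ []) :
    ∃ m ∈ l, ∀ a ∈ l, a = m ∨ PLex a m := by
  induction l with
  | nil => exact absurd rfl h
  | cons b l ih =>
    rcases eq_or_ne l [] with rfl | hl
    · exact ⟨b, by simp, by simp⟩
    · obtain ⟨m, hm, hmax⟩ := ih hl
      rcases plex_trichotomy b m with rfl | hbm | hmb
      · refine ⟨b, List.mem_cons_self, fun a ha => ?_⟩
        rcases List.mem_cons.mp ha with rfl | ha
        · exact Or.inl rfl
        · exact hmax a ha
      · refine ⟨m, List.mem_cons_of_mem _ hm, fun a ha => ?_⟩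
        rcases List.mem_cons.mp ha with rfl | ha
        · exact Or.inr hbm
        · exact hmax a ha
      · refine ⟨b, List.mem_cons_self, fun a ha => ?_⟩
        rcases List.mem_cons.mp ha with rfl | ha
        · exact Or.inl rfl
        · rcases hmax a ha with rfl | h'
          · exact Or.inr hmb
          · exact Or.inr (plex_trans h' hmb)

/-- the plex-largest proper nonempty suffix of a Lyndon word, when one exists -/
lemma exists_max_suffix {u s₀ : List X} (hu : IsLyndon u) (h0 : s₀ <:+ u) (h0u : s₀ ≠ u)
    (h0ne : s₀ ≠ []) :
    ∃ m, m <:+ u ∧ m ≠ u ∧ m ≠ [] ∧ IsLyndon m ∧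
      ∀ s, s <:+ u → s ≠ u → s ≠ [] → (s = m ∨ PLex s m) := by
  classical
  set l := ((List.range' 1 (u.length - 1)).map fun j => u.drop j) with hl
  have hmem : ∀ s, (s <:+ u ∧ s ≠ u ∧ s ≠ []) ↔ s ∈ l := by
    intro s
    constructor
    · rintro ⟨⟨a, rfl⟩, hsu, hsne⟩
      have ha : a ≠ [] := by rintro rfl; simp at hsu
      refine List.mem_map.mpr ⟨a.length, List.mem_range'.mpr ⟨a.length - 1, ?_, ?_⟩, by simp⟩
      · have h1 : 1 ≤ a.length := List.length_pos_iff.mpr ha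
        have h2 : s.length ≥ 1 := List.length_pos_iff.mpr hsne
        simp only [List.length_append]
        omega
      · have h1 : 1 ≤ a.length := List.length_pos_iff.mpr ha
        omega
    · intro hs
      obtain ⟨j, hj, rfl⟩ := List.mem_map.mp hs
      have hj' : 1 ≤ j ∧ j < u.length := by
        rw [List.mem_range'] at hj
        obtain ⟨i, hi, rfl⟩ := hj
        omega
      refine ⟨List.drop_suffix j u, ?_, ?_⟩
      · intro hdrop
        have := congrArg List.length hdrop
        rw [List.length_drop] at this
        omega
      · intro hdrop
        have := congrArg List.length hdrop
        rw [List.length_drop] at this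
        simp only [List.length_nil] at this
        omega
  have hlne : l ≠ [] := by
    intro hnil
    have := (hmem s₀).mp ⟨h0, h0u, h0ne⟩
    rw [hnil] at this; simp at this
  obtain ⟨m, hm, hmax⟩ := exists_plex_max l hlne
  obtain ⟨hmsuf, hmu, hmne⟩ := (hmem m).mpr hm
  refine ⟨m, hmsuf, hmu, hmne, ⟨hmne, fun a b hab ha hb => ?_⟩,
    fun s hs hsu hsne => hmax s ((hmem s).mp ⟨hs, hsu, hsne⟩)⟩
  -- m is Lyndon: proper suffixes of m are proper suffixes of u
  have hbu : b <:+ u := (hab ▸ (List.suffix_append a b)).trans hmsuf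
  have hbne_u : b ≠ u := by
    rintro rfl
    have h1 := hmsuf.length_le
    have h2 := congrArg List.length hab
    simp only [List.length_append] at h2
    have := List.length_pos_iff.mpr ha
    omega
  rcases hmax b ((hmem b).mp ⟨hbu, hbne_u, hb⟩) with rfl | h
  · have := congrArg List.length hab
    simp only [List.length_append] at this
    have := List.length_pos_iff.mpr ha
    omega
  · exact h

lemma lyndon_prefix_ext {u w u₂ : List X} {x y : X} (hu : IsLyndon u)
    (hdecomp : u = w ++ y :: u₂) (hxy : x < y) : IsLyndon (w ++ [x]) := by
  refine ⟨by simp, fun a b hab ha hb => ?_⟩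
  have hwu : w <+: u := ⟨y :: u₂, hdecomp.symm⟩
  -- b = b' ++ [x] and w = a ++ b'
  obtain ⟨b', c, rfl⟩ : ∃ b' c, b = b' ++ [c] := by
    rcases List.eq_nil_or_concat b with rfl | ⟨b', c, hbc⟩
    · exact absurd rfl hb
    · exact ⟨b', c, by simpa using hbc⟩
  rw [← List.append_assoc] at hab
  obtain ⟨hw, hc⟩ := List.append_inj' hab rfl
  obtain rfl : x = c := by injection hc
  subst hw
  -- the suffix b' ++ y :: u₂ of u
  have hsuff : PLex (b' ++ y :: u₂) u := by
    refine hu.2 a (b' ++ y :: u₂) ?_ ha (by simp)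
    rw [hdecomp, List.append_assoc]
  have hlen : (b' ++ y :: u₂).length ≤ u.length := by
    have := congrArg List.length hdecomp
    simp only [List.length_append, List.length_cons] at this ⊢
    omega
  obtain ⟨ρ, σ', τ, c, c', hcc', h1, h2⟩ := plex_prec_of_le_length hsuff hlen
  have hwlen : b'.length < a.length + b'.length := by
    have := List.length_pos_iff.mpr ha
    omega
  rcases lt_trichotomy ρ.length b'.length with hρ | hρ | hρ
  · -- ρ ++ [c] <+: b'
    have hpc : ρ ++ [c] <+: b' := by
      refine List.prefix_of_prefix_length_le ?_ (List.prefix_append b' (y :: u₂)) ?_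
      · rw [h1]; exact ⟨σ', by simp⟩
      · simp; omega
    obtain ⟨b₂, hb₂⟩ := hpc
    have hpc' : ρ ++ [c'] <+: a ++ b' := by
      refine List.prefix_of_prefix_length_le ?_ hwu ?_
      · rw [h2]; exact ⟨τ, by simp⟩
      · simp only [List.length_append, List.length_cons, List.length_nil, List.length_singleton]
        omega
    obtain ⟨w₂, hw₂⟩ := hpc'
    exact Or.inr ⟨ρ, b₂ ++ [x], w₂ ++ [x], c, c', hcc',
      by rw [← hb₂]; simp, by rw [← hw₂]; simp⟩
  · -- ρ = b'
    obtain rfl : b' = ρ := by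
      refine (List.IsPrefix.eq_of_length ?_ hρ).symm
      refine List.prefix_of_prefix_length_le ?_ (List.prefix_append b' (y :: u₂)) hρ.le
      rw [h1]; exact ⟨c :: σ', by simp⟩
    have hcy : y = c := by
      have h' := List.append_cancel_left h1
      exact (List.cons_eq_cons.mp h').1
    have hpc' : b' ++ [c'] <+: a ++ b' := by
      refine List.prefix_of_prefix_length_le ?_ hwu ?_
      · rw [h2]; exact ⟨τ, by simp⟩
      · simp only [List.length_append, List.length_cons, List.length_nil, List.length_singleton]
        omega
    obtain ⟨w₂, hw₂⟩ := hpc'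
    exact Or.inr ⟨b', [], w₂ ++ [x], x, c', lt_trans hxy (hcy ▸ hcc'),
      by simp, by rw [← hw₂]; simp⟩
  · -- b' proper prefix of ρ, next letter of u after b' is y
    have hbρ : b' <+: ρ := by
      refine List.prefix_of_prefix_length_le (List.prefix_append b' (y :: u₂)) ?_ hρ.le
      rw [h1]; exact ⟨c :: σ', by simp⟩
    obtain ⟨ρ₂, rfl⟩ := hbρ
    have hρ₂ : ∃ ρ₃, ρ₂ = y :: ρ₃ := by
      have h1' := List.append_cancel_left ((List.append_assoc _ _ _) ▸ h1)
      cases ρ₂ with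
      | nil => simp at hρ
      | cons z ρ₃ =>
        simp only [List.cons_append, List.cons.injEq] at h1'
        exact ⟨ρ₃, by rw [h1'.1]⟩
    obtain ⟨ρ₃, rfl⟩ := hρ₂
    have hpy : b' ++ [y] <+: a ++ b' := by
      refine List.prefix_of_prefix_length_le ?_ hwu ?_
      · rw [h2, List.append_assoc]; exact ⟨ρ₃ ++ c' :: τ, by simp⟩
      · simp only [List.length_append, List.length_cons, List.length_nil, List.length_singleton]
        omega
    obtain ⟨w₂, hw₂⟩ := hpy
    exact Or.inr ⟨b', [], w₂ ++ [x], x, y, hxy, by simp, by rw [← hw₂]; simp⟩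

lemma lyndon_pow_prefix_ext {u w u₂ : List X} {x y : X} (hu : IsLyndon u)
    (hdecomp : u = w ++ y :: u₂) (hxy : x < y) (k : ℕ) :
    IsLyndon ((List.replicate k u).flatten ++ (w ++ [x])) := by
  induction k with
  | zero => simpa using lyndon_prefix_ext hu hdecomp hxy
  | succ k ih =>
    have heq : (List.replicate (k + 1) u).flatten ++ (w ++ [x]) =
        u ++ ((List.replicate k u).flatten ++ (w ++ [x])) := by
      simp [List.replicate_succ]
    rw [heq]
    refine lyndon_append hu ih ?_
    cases k with
    | zero =>
      simp only [List.replicate, List.flatten_nil, List.nil_append]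
      exact Or.inr ⟨w, [], u₂, x, y, hxy, by simp, hdecomp⟩
    | succ k =>
      have heq2 : (List.replicate (k + 1) u).flatten ++ (w ++ [x]) =
          u ++ ((List.replicate k u).flatten ++ (w ++ [x])) := by
        simp [List.replicate_succ]
      rw [heq2]
      exact plex_proper_prefix (by simp)

lemma periodic_base {u r t₁ p : List X} {y : X} (h1 : r ++ y :: t₁ = u ++ p)
    (hlt : r.length < u.length) : ∃ u₂, u = r ++ y :: u₂ := by
  have hpre : r ++ [y] <+: u := by
    refine List.prefix_of_prefix_length_le ?_ (List.prefix_append u p) ?_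
    · rw [← h1]; exact ⟨t₁, by simp⟩
    · simp only [List.length_append, List.length_singleton]; omega
  obtain ⟨u₂, hu₂⟩ := hpre
  exact ⟨u₂, by rw [← hu₂]; simp⟩

lemma periodic_decomp {u : List X} (hune : u ≠ []) {x y : X} (n : ℕ) :
    ∀ r p t₁ σ : List X, r.length ≤ n → r ++ y :: t₁ = u ++ p → p = r ++ x :: σ →
      ∃ k w u₂, u = w ++ y :: u₂ ∧ r = (List.replicate k u).flatten ++ w := by
  induction n with
  | zero =>
    intro r p t₁ σ hn h1 h2
    have hr : r = [] := List.eq_nil_of_length_eq_zero (by omega)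
    subst hr
    obtain ⟨u₂, hu₂⟩ := periodic_base h1 (by simpa using List.length_pos_iff.mpr hune)
    exact ⟨0, [], u₂, hu₂, by simp⟩
  | succ n ih =>
    intro r p t₁ σ hn h1 h2
    rcases lt_or_ge r.length u.length with hlt | hle
    · obtain ⟨u₂, hu₂⟩ := periodic_base h1 hlt
      exact ⟨0, r, u₂, hu₂, by simp⟩
    · have hur : u <+: r := by
        refine List.prefix_of_prefix_length_le (List.prefix_append u p) ?_ hle
        rw [← h1]; exact ⟨y :: t₁, by simp⟩
      obtain ⟨r', rfl⟩ := hur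
      have hp : r' ++ y :: t₁ = p := by
        rw [List.append_assoc] at h1
        exact List.append_cancel_left h1
      have h1'' : r' ++ y :: t₁ = u ++ (r' ++ x :: σ) := by
        rw [hp, h2, List.append_assoc]
      have hlen' : r'.length ≤ n := by
        have h1u := List.length_pos_iff.mpr hune
        have hle2 : (u ++ r').length ≤ n + 1 := hn
        simp only [List.length_append] at h1u hle2 ⊢
        omega
      obtain ⟨k, w, u₂, hu₂, hr'⟩ := ih r' (r' ++ x :: σ) t₁ σ hlen' h1'' rfl
      exact ⟨k + 1, w, u₂, hu₂, by rw [hr']; simp [List.replicate_succ]⟩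

lemma infix_decomp {t u v : List X} (h : t <:+: u ++ v) :
    t <:+: u ∨ t <:+: v ∨
      ∃ s' p, s' <:+ u ∧ s' ≠ [] ∧ p <+: v ∧ p ≠ [] ∧ t = s' ++ p := by
  obtain ⟨a, b, hab⟩ := h
  rcases le_or_gt (a.length + t.length) u.length with hle | hgt
  · left
    have hpre : a ++ t <+: u := by
      refine List.prefix_of_prefix_length_le ?_ (List.prefix_append u v) ?_
      · exact ⟨b, by rw [← hab, List.append_assoc]⟩
      · simpa using hle
    obtain ⟨z, hz⟩ := hpre
    exact ⟨a, z, hz⟩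
  rcases le_or_gt u.length a.length with hle2 | hlt2
  · right; left
    have hpre : u <+: a := by
      refine List.prefix_of_prefix_length_le (List.prefix_append u v) ?_ hle2
      exact ⟨t ++ b, by rw [← hab]; simp⟩
    obtain ⟨a', rfl⟩ := hpre
    refine ⟨a', b, ?_⟩
    have := hab
    simp only [List.append_assoc] at this ⊢
    exact List.append_cancel_left this
  · right; right
    have hau : a <+: u := by
      refine List.prefix_of_prefix_length_le ?_ (List.prefix_append u v) hlt2.le
      exact ⟨t ++ b, by rw [← hab]; simp⟩
    obtain ⟨s', rfl⟩ := hau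
    have htb : t ++ b = s' ++ v := by
      have := hab
      simp only [List.append_assoc] at this
      exact List.append_cancel_left this
    have hs'len : s'.length < t.length := by
      simp only [List.length_append] at hgt
      omega
    have hs't : s' <+: t := by
      refine List.prefix_of_prefix_length_le ?_ (List.prefix_append t b) hs'len.le
      rw [htb]; exact List.prefix_append s' v
    obtain ⟨p, rfl⟩ := hs't
    have hpv : p ++ b = v := by
      rw [List.append_assoc] at htb
      exact List.append_cancel_left htb
    refine ⟨s', p, ⟨a, rfl⟩, ?_, ⟨b, hpv⟩, ?_, rfl⟩
    · intro hnil
      rw [hnil] at hlt2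
      simp at hlt2
    · intro hnil
      rw [hnil] at hs'len
      simp at hs'len

lemma prec_append_left {a b c : List X} (h : Prec a b) : Prec (a ++ c) b := by
  obtain ⟨r, s, t, x, y, hxy, rfl, rfl⟩ := h
  exact ⟨r, s ++ c, t, x, y, hxy, by simp, rfl⟩


lemma main_aux (U : Set (List X)) (hU : ∀ u ∈ U, IsLyndon u)
    (hclosed : LyndonClosed U) (u v : List X) (hu : u ∈ U) (hv : v ∈ U)
    (hvu : PLex v u) (hgap : ¬ ∃ w ∈ U, PLex w u ∧ PLex v w) :
    IsLyndon (u ++ v) ∧ IsShirshov (u ++ v) u v ∧ (u ++ v) ∈ PhiL U := by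
  have hlu := hU u hu
  have hlv := hU v hv
  have hune := hlu.1
  have hvne := hlv.1
  have hnomid : ∀ s, s <:+ u → s ≠ u → s ≠ [] → ¬ PLex v s := by
    intro s hs hsu hsne hvs
    obtain ⟨m, hmsuf, hmu, hmne, hml, hmax⟩ := exists_max_suffix hlu hs hsu hsne
    have hmU : m ∈ U := hclosed u hu m hml hmsuf.isInfix
    have hmplex : PLex m u := by
      obtain ⟨a, ha⟩ := hmsuf
      refine hlu.2 a m ha.symm ?_ hmne
      rintro rfl
      rw [List.nil_append] at ha
      exact hmu ha
    have hvm : PLex v m := by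
      rcases hmax s hs hsu hsne with rfl | h
      · exact hvs
      · exact plex_trans hvs h
    exact hgap ⟨m, hmU, hmplex, hvm⟩
  have hlyndon : IsLyndon (u ++ v) := lyndon_append hlu hlv hvu
  have hvlt : PLex v (u ++ v) := plex_self_append hlv hune hvu
  have hshir : IsShirshov (u ++ v) u v := by
    refine ⟨rfl, hune, hvne, fun w hw hwne hwnil => ?_⟩
    rcases le_or_gt w.length v.length with hle | hlt
    · have hwv : w <:+ v := suffix_of_suffix_length_le hw (List.suffix_append u v) hle
      obtain ⟨c, hc⟩ := hwv
      rcases eq_or_ne c [] with rfl | hcne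
      · exact Or.inl (by simpa using hc)
      · exact Or.inr (hlv.2 c w hc.symm hcne hwnil)
    · obtain ⟨a, s', hs'u, rfl, hs'ne⟩ := suffix_decomp hw hlt
      have hane : a ≠ [] := by
        rintro rfl
        rw [List.nil_append] at hs'u
        exact hwne (by rw [hs'u])
      have hs'proper : s' ≠ u := by
        intro h
        have := congrArg List.length hs'u
        rw [h] at this
        simp only [List.length_append] at this
        have := List.length_pos_iff.mpr hane
        omega
      rcases plex_trichotomy s' v with rfl | hsv | hvs
      · exact Or.inr (plex_proper_prefix hvne)
      · rcases hsv with ⟨⟨z, hz⟩, hne⟩ | hprec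
        · rcases eq_or_ne z [] with rfl | hzne
          · exact absurd (by simpa using hz) hne
          · refine Or.inr ?_
            rw [← hz, List.append_assoc]
            exact plex_proper_prefix (by simp [hzne])
        · exact Or.inr (Or.inr (prec_append_left hprec))
      · exact absurd hvs (hnomid s' ⟨a, hs'u⟩ hs'proper hs'ne)
  have hnotU : (u ++ v) ∉ U := fun hUuv =>
    hgap ⟨u ++ v, hUuv, plex_proper_prefix hvne, hvlt⟩
  refine ⟨hlyndon, hshir, hlyndon, hnotU, fun t htl hinf htne => ?_⟩
  rcases infix_decomp hinf with hiu | hiv | ⟨s', p, hs'suf, hs'ne, hppre, hpne, rfl⟩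
  · exact hclosed u hu t htl hiu
  · exact hclosed v hv t htl hiv
  · have hpt : PLex p (s' ++ p) := htl.2 s' p rfl hs'ne hpne
    obtain ⟨r, σ, τ, x, y, hxy, hp_eq, ht_eq⟩ :=
      plex_prec_of_le_length hpt (by simp)
    rcases eq_or_ne s' u with rfl | hs'proper
    · -- case A
      obtain ⟨z, hz⟩ := hppre
      have hzne : z ≠ [] := by
        rintro rfl
        exact htne (by rw [← hz]; simp)
      obtain ⟨k, w, u₂, hu_dec, hr_dec⟩ :=
        periodic_decomp hune r.length r p τ σ le_rfl ht_eq.symm hp_eq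
      have hql : IsLyndon ((List.replicate k s').flatten ++ (w ++ [x])) :=
        lyndon_pow_prefix_ext hlu hu_dec hxy k
      have hq_eq : (List.replicate k s').flatten ++ (w ++ [x]) = r ++ [x] := by
        rw [hr_dec, List.append_assoc]
      rw [hq_eq] at hql
      have hvq_eq : v = (r ++ [x]) ++ (σ ++ z) := by
        rw [← hz, hp_eq]; simp
      have hqU : (r ++ [x]) ∈ U := by
        refine hclosed v hv _ hql ?_
        exact (List.IsPrefix.isInfix ⟨σ ++ z, hvq_eq.symm⟩)
      have hvq : PLex v (r ++ [x]) := by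
        rw [hvq_eq]
        exact plex_proper_prefix (by simp [hzne])
      have hqu : PLex (r ++ [x]) s' := by
        cases k with
        | zero =>
          rw [hr_dec]
          simp only [List.replicate, List.flatten_nil, List.nil_append]
          exact Or.inr ⟨w, [], u₂, x, y, hxy, by simp, hu_dec⟩
        | succ k =>
          rw [hr_dec]
          have : (List.replicate (k + 1) s').flatten ++ w ++ [x] =
              s' ++ ((List.replicate k s').flatten ++ w ++ [x]) := by
            simp [List.replicate_succ]
          rw [this]
          exact plex_proper_prefix (by simp)
      exact absurd ⟨r ++ [x], hqU, hqu, hvq⟩ hgap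
    · -- case B
      exfalso
      obtain ⟨a, ha⟩ := hs'suf
      have hane : a ≠ [] := by
        rintro rfl
        exact hs'proper (by simpa using ha)
      have hssuf : s' ++ v <:+ u ++ v := ⟨a, by rw [← List.append_assoc, ha]⟩
      have hssne : s' ++ v ≠ u ++ v := by
        intro h
        have h1 := congrArg List.length h
        have h2 := congrArg List.length ha
        simp only [List.length_append] at h1 h2
        have := List.length_pos_iff.mpr hane
        omega
      have hlev : PLex (s' ++ v) v := by
        rcases hshir.2.2.2 (s' ++ v) hssuf hssne (by simp [hvne]) with h | h
        · exfalso
          have := congrArg List.length h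
          simp only [List.length_append] at this
          have := List.length_pos_iff.mpr hs'ne
          omega
        · exact h
      obtain ⟨z, hz⟩ := hppre
      have hvgt : PLex v (s' ++ v) := by
        refine Or.inr ⟨r, σ ++ z, τ ++ z, x, y, hxy, ?_, ?_⟩
        · rw [← hz, hp_eq]; simp
        · rw [← hz, ← List.append_assoc, ht_eq]; simp
      exact plex_asymm hlev hvgt


/-- Let `U` be a closed set of Lyndon words and `u, v ∈ U` with
`u >_lex v` adjacent in `U` (no `w ∈ U` with `u >_lex w >_lex v`). Then `uv` is a
Lyndon word with Shirshov factorization `(u, v)` and `uv ∈ Φ_L(U)`; consequently,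
if `U` is finite then `#(Φ_L(U) \ X) ≥ #(U) - 1`. -/
theorem shirshov_append_mem_phiL (U : Set (List X)) (hU : ∀ u ∈ U, IsLyndon u)
    (hclosed : LyndonClosed U) (u v : List X) (hu : u ∈ U) (hv : v ∈ U)
    (hvu : PLex v u) (hgap : ¬ ∃ w ∈ U, PLex w u ∧ PLex v w) :
    (IsLyndon (u ++ v) ∧ IsShirshov (u ++ v) u v ∧ (u ++ v) ∈ PhiL U) ∧
    (U.Finite → U.encard ≤ {w | w ∈ PhiL U ∧ w.length ≠ 1}.encard + 1) := by
  refine ⟨main_aux U hU hclosed u v hu hv hvu hgap, fun hfin => ?_⟩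
  classical
  set T : Set (List X) := {w | w ∈ PhiL U ∧ w.length ≠ 1} with hT
  set S : Set (List X) := {w | w ∈ U ∧ ∃ z ∈ U, PLex z w} with hS
  have hSsub : S ⊆ U := fun w hw => hw.1
  have hpred : ∀ w ∈ S, ∃ m, m ∈ U ∧ PLex m w ∧
      ∀ z ∈ U, PLex z w → z = m ∨ PLex z m := by
    intro w hw
    obtain ⟨hwU, z₀, hz₀U, hz₀⟩ := hw
    have hfin' : {z | z ∈ U ∧ PLex z w}.Finite := hfin.subset (fun z hz => hz.1)
    have hnel : hfin'.toFinset.toList ≠ [] := by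
      intro hnil
      have : z₀ ∈ hfin'.toFinset.toList := by
        rw [Finset.mem_toList, Set.Finite.mem_toFinset]
        exact ⟨hz₀U, hz₀⟩
      rw [hnil] at this
      simp at this
    obtain ⟨m, hm, hmax⟩ := exists_plex_max hfin'.toFinset.toList hnel
    rw [Finset.mem_toList, Set.Finite.mem_toFinset] at hm
    refine ⟨m, hm.1, hm.2, fun z hz hzw => ?_⟩
    refine hmax z ?_
    rw [Finset.mem_toList, Set.Finite.mem_toFinset]
    exact ⟨hz, hzw⟩
  choose! pred hpredU hpredlt hpredmax using hpred
  set F : List X → List X := fun w => w ++ pred w with hF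
  have hmain : ∀ w ∈ S, IsLyndon (F w) ∧ IsShirshov (F w) w (pred w) ∧ F w ∈ PhiL U := by
    intro w hw
    refine main_aux U hU hclosed w (pred w) (hSsub hw) (hpredU w hw) (hpredlt w hw) ?_
    rintro ⟨z, hzU, h1, h2⟩
    rcases hpredmax w hw z hzU h1 with rfl | h3
    · exact plex_irrefl _ h2
    · exact plex_asymm h2 h3
  have hmaps : ∀ w ∈ S, F w ∈ T := by
    intro w hw
    obtain ⟨hly, hsh, hphi⟩ := hmain w hw
    refine ⟨hphi, ?_⟩
    have h1 := List.length_pos_iff.mpr (hU w (hSsub hw)).1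
    have h2 := List.length_pos_iff.mpr (hU (pred w) (hpredU w hw)).1
    simp only [hF, List.length_append]
    omega
  have hinj : Set.InjOn F S := by
    intro w₁ hw₁ w₂ hw₂ hEq
    obtain ⟨-, hsh₁, -⟩ := hmain w₁ hw₁
    obtain ⟨-, hsh₂, -⟩ := hmain w₂ hw₂
    rw [hEq] at hsh₁
    -- both Shirshov factorizations of F w₂
    have hps : pred w₁ = pred w₂ := by
      have hsuf₁ : pred w₁ <:+ F w₂ := by rw [← hEq]; exact ⟨w₁, rfl⟩
      have hne₁ : pred w₁ ≠ F w₂ := by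
        intro h
        have := congrArg List.length h
        rw [← hEq] at this
        simp only [hF, List.length_append] at this
        have := List.length_pos_iff.mpr (hU w₁ (hSsub hw₁)).1
        omega
      have hsuf₂ : pred w₂ <:+ F w₂ := ⟨w₂, rfl⟩
      have hne₂ : pred w₂ ≠ F w₂ := by
        intro h
        have := congrArg List.length h
        simp only [hF, List.length_append] at this
        have := List.length_pos_iff.mpr (hU w₂ (hSsub hw₂)).1
        omega
      have hn₁ := (hU (pred w₁) (hpredU w₁ hw₁)).1
      have hn₂ := (hU (pred w₂) (hpredU w₂ hw₂)).1
      rcases hsh₂.2.2.2 (pred w₁) hsuf₁ hne₁ hn₁ with h | h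
      · exact h
      · rcases hsh₁.2.2.2 (pred w₂) hsuf₂ hne₂ hn₂ with h' | h'
        · exact h'.symm
        · exact absurd h (fun hh => plex_asymm hh h')
    have hEq' : w₁ ++ pred w₁ = w₂ ++ pred w₂ := hEq
    rw [hps] at hEq'
    simpa using hEq'
  have hST : S.encard ≤ T.encard := by
    calc S.encard = (F '' S).encard := (hinj.encard_image).symm
    _ ≤ T.encard := Set.encard_mono (fun x ⟨w, hw, hwx⟩ => hwx ▸ hmaps w hw)
  have hdiff : (U \ S).encard ≤ 1 := by
    rw [Set.encard_le_one_iff]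
    rintro a b ⟨haU, haS⟩ ⟨hbU, hbS⟩
    rcases plex_trichotomy a b with h | h | h
    · exact h
    · exact absurd ⟨hbU, a, haU, h⟩ hbS
    · exact absurd ⟨haU, b, hbU, h⟩ haS
  calc U.encard = (S ∪ (U \ S)).encard := by rw [Set.union_diff_cancel hSsub]
  _ ≤ S.encard + (U \ S).encard := Set.encard_union_le _ _
  _ ≤ T.encard + 1 := add_le_add hST hdiff
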